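/- Let F_1,…,F_N : ℝ³ → ℝ be smooth, strictly positive Schwartz functions such that each ∇ log F_i has at most polynomial growth. Then the entropy production D(F) := (1/2) ∑_{i,j=1}^N ∬_{ℝ³×ℝ³} F_i(p) F_j(p') (∇log F_i(p) − ∇log F_j(p')) · A^{(ij)}[p/m_i − p'/m_j] (∇log F_i(p) − ∇log F_j(p')) dp dp' vanishes, D(F) = 0, if and only if there exist constants ρ̃_1,…,ρ̃_N > 0, u ∈ ℝ³ and θ > 0 such that F_i(p) = ρ̃_i (2π m_i θ)^{-3/2} exp(−|p − m_i u|²/(2 m_i θ)) for all i = 1,…,N, i.e. the F_i are Maxwellians with the same velocity u and the same temperature θ. -/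

import Mathlib

noncomputable section

open Real MeasureTheory Finset
open scoped InnerProductSpace

abbrev E3 : Type := EuclideanSpace ℝ (Fin 3)

/-- Divergence of a vector field on `E3`. -/
def diverg (V : E3 → E3) (p : E3) : ℝ :=
  ∑ k : Fin 3, fderiv ℝ V p (EuclideanSpace.single k 1) k

/-- The Landau matrix `A^{(ij)}[z]`, applied to a vector `v`:
`A[z] v = c |z|^{γ+2} (v - (z·v/|z|²) z)`. -/
def Aapp (c γ : ℝ) (z v : E3) : E3 :=
  (c * ‖z‖ ^ (γ + 2)) • (v - (⟪z, v⟫_ℝ / ‖z‖ ^ (2 : ℕ)) • z)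

/-- Maxwellian with density `ρ`, particle mass `mass` and temperature `kT`. -/
def Maxw (ρ mass kT : ℝ) (p : E3) : ℝ :=
  ρ * (2 * π * mass * kT) ^ (-(3 : ℝ) / 2) * Real.exp (-‖p‖ ^ (2 : ℕ) / (2 * mass * kT))

variable {N : ℕ}

/-- The linearized Landau collision operator `L_{ij}`. -/
def Lij (mass ρ : Fin N → ℝ) (C : Fin N → Fin N → ℝ) (γ kT : ℝ)
    (f : Fin N → E3 → ℝ) (i j : Fin N) (p : E3) : ℝ :=
  (Maxw (ρ i) (mass i) kT p) ^ (-(1 : ℝ) / 2) *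
    diverg (fun q => ∫ p',
      (Maxw (ρ i) (mass i) kT q * Maxw (ρ j) (mass j) kT p') •
        Aapp (C i j) γ ((mass i)⁻¹ • q - (mass j)⁻¹ • p')
          (gradient (fun r => f i r / Real.sqrt (Maxw (ρ i) (mass i) kT r)) q -
           gradient (fun r => f j r / Real.sqrt (Maxw (ρ j) (mass j) kT r)) p')) p

/-- The full linearized operator `L = (L_1, …, L_N)`, `L_i = ∑_j L_{ij}`. -/
def Lvec (mass ρ : Fin N → ℝ) (C : Fin N → Fin N → ℝ) (γ kT : ℝ)
    (f : Fin N → E3 → ℝ) (i : Fin N) (p : E3) : ℝ :=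
  ∑ j, Lij mass ρ C γ kT f i j p

/-- The mono-species part `L^m`. -/
def Lmvec (mass ρ : Fin N → ℝ) (C : Fin N → Fin N → ℝ) (γ kT : ℝ)
    (f : Fin N → E3 → ℝ) (i : Fin N) (p : E3) : ℝ :=
  Lij mass ρ C γ kT f i i p

/-- The bi-species part `L^b = L - L^m`. -/
def Lbvec (mass ρ : Fin N → ℝ) (C : Fin N → Fin N → ℝ) (γ kT : ℝ)
    (f : Fin N → E3 → ℝ) (i : Fin N) (p : E3) : ℝ :=
  ∑ j ∈ Finset.univ.erase i, Lij mass ρ C γ kT f i j p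

/-- `L²` inner product of two `N`-tuples of functions. -/
def ipL2 (f g : Fin N → E3 → ℝ) : ℝ := ∑ i, ∫ p, f i p * g i p

/-- Projection of `v` on the direction of `p`: `P(p) v = (p⊗p/|p|²) v`. -/
def projP (p v : E3) : E3 := (⟪p, v⟫_ℝ / ‖p‖ ^ (2 : ℕ)) • p

/-- The squared `ℋ`-norm. -/
def Hnorm2 (γ : ℝ) (f : Fin N → E3 → ℝ) : ℝ :=
  ∑ i, ∫ p,
    ((1 + ‖p‖ ^ (2 : ℕ)) ^ (γ / 2) * ‖projP p (gradient (f i) p)‖ ^ (2 : ℕ) +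
     (1 + ‖p‖ ^ (2 : ℕ)) ^ ((γ + 2) / 2) *
       ‖gradient (f i) p - projP p (gradient (f i) p)‖ ^ (2 : ℕ) +
     (1 + ‖p‖ ^ (2 : ℕ)) ^ ((γ + 2) / 2) * (f i p) ^ (2 : ℕ))

/-- Membership in the kernel `N(L^m)`. -/
def memNLm (mass ρ : Fin N → ℝ) (kT : ℝ) (g : Fin N → E3 → ℝ) : Prop :=
  ∃ (a c : Fin N → ℝ) (u : Fin N → E3), ∀ i p,
    g i p = Real.sqrt (Maxw (ρ i) (mass i) kT p) * (a i + ⟪u i, p⟫_ℝ + c i * ‖p‖ ^ (2 : ℕ))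

/-- Membership in the kernel `N(L)`. -/
def memNL (mass ρ : Fin N → ℝ) (kT : ℝ) (g : Fin N → E3 → ℝ) : Prop :=
  ∃ (b : Fin N → ℝ) (u : E3) (c : ℝ), ∀ i p,
    g i p = Real.sqrt (Maxw (ρ i) (mass i) kT p) *
      (b i + ⟪u, p⟫_ℝ + c * ‖p‖ ^ (2 : ℕ) / (2 * mass i))

/-- `g` is the `L²`-orthogonal projection of `f` onto the subspace described by `S`. -/
def IsL2ProjOn (S : (Fin N → E3 → ℝ) → Prop) (f g : Fin N → E3 → ℝ) : Prop :=
  S g ∧ ∀ h, S h → ∑ i, ∫ p, (f i p - g i p) * h i p = 0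

/-- The nonlinear Landau collision operator `Q_{ij}`. -/
def Qij (mass : Fin N → ℝ) (C : Fin N → Fin N → ℝ) (γ : ℝ)
    (fi fj : E3 → ℝ) (i j : Fin N) (p : E3) : ℝ :=
  diverg (fun q => ∫ p',
    Aapp (C i j) γ ((mass i)⁻¹ • q - (mass j)⁻¹ • p')
      (fj p' • gradient fi q - fi q • gradient fj p')) p


/-- The entropy production functional `D(F)`. -/
def entProd (mass : Fin N → ℝ) (C : Fin N → Fin N → ℝ) (γ : ℝ)
    (F : Fin N → E3 → ℝ) : ℝ :=
  (1 / 2) * ∑ i, ∑ j, ∫ p, ∫ p',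
    F i p * F j p' *
      ⟪gradient (fun q => Real.log (F i q)) p - gradient (fun q => Real.log (F j q)) p',
        Aapp (C i j) γ ((mass i)⁻¹ • p - (mass j)⁻¹ • p')
          (gradient (fun q => Real.log (F i q)) p -
            gradient (fun q => Real.log (F j q)) p')⟫_ℝ

namespace EntropyAux
open scoped ENNReal


/- ===== gradient of quadratics ===== -/

lemma hasGradientAt_quad (a b : ℝ) (u x : E3) :
    HasGradientAt (fun p : E3 => a * ‖p‖ ^ (2:ℕ) + ⟪u, p⟫_ℝ + b) ((2*a) • x + u) x := by
  have h1 : HasFDerivAt (fun p : E3 => ⟪p, p⟫_ℝ)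
      ((fderivInnerCLM ℝ (x, x)).comp ((ContinuousLinearMap.id ℝ E3).prod
        (ContinuousLinearMap.id ℝ E3))) x :=
    (hasFDerivAt_id x).inner ℝ (hasFDerivAt_id x)
  have h2 : HasFDerivAt (fun p : E3 => ⟪u, p⟫_ℝ) (innerSL ℝ u) x :=
    (innerSL ℝ u).hasFDerivAt
  have h3 := ((h1.const_mul a).add h2).add_const b
  have heq : (fun p : E3 => a * ⟪p, p⟫_ℝ + ⟪u, p⟫_ℝ + b)
      = fun p : E3 => a * ‖p‖ ^ (2:ℕ) + ⟪u, p⟫_ℝ + b := by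
    funext p; rw [real_inner_self_eq_norm_sq]
  change HasFDerivAt (fun p : E3 => a * ⟪p, p⟫_ℝ + ⟪u, p⟫_ℝ + b) _ x at h3
  rw [heq] at h3
  rw [hasGradientAt_iff_hasFDerivAt]
  refine h3.congr_fderiv ?_
  ext y
  simp [fderivInnerCLM_apply, InnerProductSpace.toDual_apply_apply, inner_add_left, inner_smul_left,
    real_inner_comm x y]
  ring

/- ===== linear algebra : parallel ⇒ affine ===== -/

lemma smul_eq_smul_zero {q r : E3} (hq : ∀ a : ℝ, q ≠ a • r) (hr : r ≠ 0)
    {s t : ℝ} (h : s • q = t • r) : s = 0 ∧ t = 0 := by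
  rcases eq_or_ne s 0 with hs | hs
  · refine ⟨hs, ?_⟩
    rw [hs, zero_smul] at h
    rcases smul_eq_zero.1 h.symm with ht | ht
    · exact ht
    · exact absurd ht hr
  · exact absurd (by rw [mul_smul, ← h, inv_smul_smul₀ hs] : q = (s⁻¹ * t) • r) (hq _)

lemma exists_indep (q r : E3) :
    ∃ v : E3, v ≠ 0 ∧ (∀ a : ℝ, v ≠ a • q) ∧ (∀ a : ℝ, v ≠ a • r) := by
  set S := (ℝ ∙ q) ⊔ (ℝ ∙ r) with hS
  have hfr : Module.finrank ℝ S ≤ 2 := by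
    have := Submodule.finrank_sup_add_finrank_inf_eq (ℝ ∙ q) (ℝ ∙ r)
    have h1 := finrank_span_le_card (R := ℝ) ({q} : Set E3)
    have h2 := finrank_span_le_card (R := ℝ) ({r} : Set E3)
    simp at h1 h2
    rw [← hS] at this
    omega
  have hne : S ≠ ⊤ := by
    intro h
    rw [h, finrank_top] at hfr
    simp [finrank_euclideanSpace] at hfr
  obtain ⟨v, hv⟩ : ∃ v, v ∉ S := by
    by_contra h
    push_neg at h
    exact hne (Submodule.eq_top_iff'.2 h)
  refine ⟨v, ?_, ?_, ?_⟩
  · rintro rfl; exact hv (Submodule.zero_mem S)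
  · rintro a rfl
    exact hv (Submodule.mem_sup_left (Submodule.smul_mem _ a (Submodule.mem_span_singleton_self q)))
  · rintro a rfl
    exact hv (Submodule.mem_sup_right (Submodule.smul_mem _ a (Submodule.mem_span_singleton_self r)))

lemma affine_of_parallel (f : E3 → E3)
    (H : ∀ q q' : E3, q ≠ q' → ∃ s : ℝ, f q - f q' = s • (q - q')) :
    ∃ (lam : ℝ) (u : E3), ∀ q, f q = lam • q + u := by
  classical
  have hσ : ∀ q : E3, q ≠ 0 → ∃ s : ℝ, f q - f 0 = s • q := by
    intro q hq; simpa using H q 0 hq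
  set σ : E3 → ℝ := fun q => if h : q = 0 then 0 else Classical.choose (hσ q h) with hσdef
  have hg : ∀ q : E3, q ≠ 0 → f q - f 0 = σ q • q := by
    intro q hq
    simp only [hσdef, dif_neg hq]
    exact Classical.choose_spec (hσ q hq)
  have claim : ∀ q r : E3, q ≠ 0 → r ≠ 0 → (∀ a : ℝ, q ≠ a • r) → σ q = σ r := by
    intro q r hq hr hqr
    have hne : q ≠ r := by intro h; exact hqr 1 (by rw [h, one_smul])
    obtain ⟨t, ht⟩ := H q r hne
    have h2 : σ q • q - σ r • r = t • q - t • r := by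
      rw [← hg q hq, ← hg r hr]
      have : f q - f 0 - (f r - f 0) = f q - f r := by abel
      rw [this, ht, smul_sub]
    have h3 : (σ q - t) • q = (σ r - t) • r := by
      rw [sub_smul, sub_smul]
      rw [sub_eq_sub_iff_sub_eq_sub] at h2 ⊢
      linear_combination (norm := module) h2
    obtain ⟨h4, h5⟩ := smul_eq_smul_zero hqr hr h3
    rw [sub_eq_zero] at h4 h5
    rw [h4, h5]
  have e1ne : (EuclideanSpace.single 0 1 : E3) ≠ 0 := by
    intro h
    have := congrArg (fun w : E3 => w (0 : Fin 3)) h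
    simp [EuclideanSpace.single_apply] at this
  have main : ∀ q r : E3, q ≠ 0 → r ≠ 0 → σ q = σ r := by
    intro q r hq hr
    obtain ⟨v, hv0, hvq, hvr⟩ := exists_indep q r
    have h1 : σ q = σ v := by
      refine claim q v hq hv0 ?_
      intro a h
      rcases eq_or_ne a 0 with rfl | ha
      · rw [zero_smul] at h; exact hq h
      · exact hvq a⁻¹ (by rw [h, inv_smul_smul₀ ha])
    have h2 : σ r = σ v := by
      refine claim r v hr hv0 ?_
      intro a h
      rcases eq_or_ne a 0 with rfl | ha
      · rw [zero_smul] at h; exact hr h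
      · exact hvr a⁻¹ (by rw [h, inv_smul_smul₀ ha])
    rw [h1, h2]
  refine ⟨σ (EuclideanSpace.single 0 1), f 0, fun q => ?_⟩
  rcases eq_or_ne q 0 with rfl | hq
  · rw [smul_zero, zero_add]
  · rw [← main q (EuclideanSpace.single 0 1) hq e1ne, ← hg q hq]
    abel

lemma single_indep :
    ∀ a : ℝ, (EuclideanSpace.single 0 1 : E3) ≠ a • EuclideanSpace.single 1 1 := by
  intro a h
  have := congrArg (fun w : E3 => w (0 : Fin 3)) h
  simp [EuclideanSpace.single_apply] at this

lemma single_ne_zero' : (EuclideanSpace.single 1 1 : E3) ≠ 0 := by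
  intro h
  have := congrArg (fun w : E3 => w (1 : Fin 3)) h
  simp [EuclideanSpace.single_apply] at this

lemma affine_of_parallel_family {N : ℕ} (w : Fin N → E3 → E3)
    (H : ∀ i j (q q' : E3), q ≠ q' → ∃ s : ℝ, w i q - w j q' = s • (q - q')) :
    ∃ (lam : ℝ) (u : E3), ∀ i q, w i q = lam • q + u := by
  classical
  rcases Nat.eq_zero_or_pos N with rfl | hN
  · exact ⟨0, 0, fun i => absurd i.2 (by simp)⟩
  have hsingle : ∀ i, ∃ (lam : ℝ) (u : E3), ∀ q, w i q = lam • q + u :=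
    fun i => affine_of_parallel (w i) (fun q q' h => H i i q q' h)
  choose lam u hw using hsingle
  set e1 : E3 := EuclideanSpace.single 0 1 with he1
  set e2 : E3 := EuclideanSpace.single 1 1 with he2
  have he1ne : e1 ≠ 0 := by
    intro h; have := congrArg (fun w : E3 => w (0 : Fin 3)) h; simp [he1, EuclideanSpace.single_apply] at this
  have hu : ∀ i j, u i = u j := by
    intro i j
    have husp : ∀ e : E3, e ≠ 0 → ∃ c : ℝ, u i - u j = c • e := by
      intro e he
      obtain ⟨s, hs⟩ := H i j e (-e) (by
        intro h
        apply he
        have : (2 : ℝ) • e = 0 := by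
          rw [two_smul]
          nth_rewrite 1 [h]
          abel
        simpa using smul_eq_zero.1 this |>.resolve_left (by norm_num))
      rw [hw i e, hw j (-e)] at hs
      refine ⟨2*s - lam i - lam j, ?_⟩
      have : e - -e = (2:ℝ) • e := by rw [two_smul]; abel
      rw [this, smul_smul] at hs
      linear_combination (norm := module) hs
    obtain ⟨c1, hc1⟩ := husp e1 he1ne
    obtain ⟨c2, hc2⟩ := husp e2 single_ne_zero'
    have h3 : c1 • e1 = c2 • e2 := by rw [← hc1, ← hc2]
    obtain ⟨h4, h5⟩ := smul_eq_smul_zero (fun a => single_indep a) single_ne_zero' h3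
    have : u i - u j = 0 := by rw [hc1, h4, zero_smul]
    exact sub_eq_zero.1 this
  have key : ∀ i j, lam i = lam j := by
    intro i j
    obtain ⟨s, hs⟩ := H i j e1 e2 (by
      intro h
      exact single_indep 1 (by rw [one_smul]; exact h))
    rw [hw i e1, hw j e2, hu i j] at hs
    have h3 : (lam i - s) • e1 = (lam j - s) • e2 := by
      rw [sub_smul, sub_smul]
      linear_combination (norm := module) hs
    obtain ⟨h4, h5⟩ := smul_eq_smul_zero (fun a => single_indep a) single_ne_zero' h3
    rw [sub_eq_zero] at h4 h5
    rw [h4, h5]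
  refine ⟨lam ⟨0, hN⟩, u ⟨0, hN⟩, fun i q => ?_⟩
  rw [hw i q, key i ⟨0, hN⟩, hu i ⟨0, hN⟩]

/- ===== log F gradient facts ===== -/

lemma logF_contDiff (F : SchwartzMap E3 ℝ) (hpos : ∀ p, 0 < F p) :
    ContDiff ℝ 1 (fun p => Real.log (F p)) :=
  (F.smooth 1).log (fun x => (hpos x).ne')

lemma logF_grad_continuous (F : SchwartzMap E3 ℝ) (hpos : ∀ p, 0 < F p) :
    Continuous (fun p => gradient (fun q => Real.log (F q)) p) := by
  have h := (logF_contDiff F hpos).continuous_fderiv one_ne_zero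
  exact (InnerProductSpace.toDual ℝ E3).symm.continuous.comp h

lemma eq_quadratic_of_gradient_affine (f : E3 → ℝ) (hf : Differentiable ℝ f)
    (a : ℝ) (u : E3) (hgrad : ∀ p, gradient f p = a • p + u) (p : E3) :
    f p = (a/2) * ‖p‖ ^ (2:ℕ) + ⟪u, p⟫_ℝ + f 0 := by
  set Q : E3 → ℝ := fun q => (a/2) * ‖q‖ ^ (2:ℕ) + ⟪u, q⟫_ℝ + 0 with hQ
  have hQg : ∀ x, HasGradientAt Q (a • x + u) x := by
    intro x
    have := hasGradientAt_quad (a/2) 0 u x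
    rwa [show 2*(a/2) = a by ring] at this
  have hφ : ∀ x, HasFDerivAt (fun q => f q - Q q) (0 : E3 →L[ℝ] ℝ) x := by
    intro x
    have h1 : HasFDerivAt f (InnerProductSpace.toDual ℝ E3 (a • x + u)) x := by
      have := (hf x).hasGradientAt
      rw [hgrad x] at this
      exact this.hasFDerivAt
    have h2 := (hQg x).hasFDerivAt
    exact (h1.sub h2).congr_fderiv (sub_self _)
  have hconst : f p - Q p = f 0 - Q 0 :=
    is_const_of_fderiv_eq_zero (fun x => (hφ x).differentiableAt)
      (fun x => (hφ x).fderiv) p 0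
  have hQ0 : Q 0 = 0 := by simp [hQ]
  have hQp : Q p = (a/2) * ‖p‖ ^ (2:ℕ) + ⟪u, p⟫_ℝ := by simp [hQ]
  rw [hQ0, hQp] at hconst
  linarith


/- ===== Aapp facts ===== -/

lemma inner_Aapp (c γ : ℝ) (z d : E3) :
    ⟪d, Aapp c γ z d⟫_ℝ
      = (c * ‖z‖ ^ (γ+2)) * ‖d - (⟪z, d⟫_ℝ / ‖z‖ ^ (2:ℕ)) • z‖ ^ (2:ℕ) := by
  rw [Aapp, real_inner_smul_right]
  congr 1
  set t : ℝ := ⟪z, d⟫_ℝ / ‖z‖ ^ (2:ℕ) with ht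
  have hzw : t * ⟪z, d - t • z⟫_ℝ = 0 := by
    rcases eq_or_ne z 0 with rfl | hz
    · simp [ht]
    · have hz2 : ‖z‖ ^ (2:ℕ) ≠ 0 := pow_ne_zero _ (norm_ne_zero_iff.2 hz)
      have : ⟪z, d - t • z⟫_ℝ = ⟪z, d⟫_ℝ - t * ‖z‖ ^ (2:ℕ) := by
        rw [inner_sub_right, real_inner_smul_right, real_inner_self_eq_norm_sq]
      rw [this, ht]
      field_simp
      ring
  have : ‖d - t • z‖ ^ (2:ℕ) = ⟪d - t • z, d - t • z⟫_ℝ := (real_inner_self_eq_norm_sq _).symm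
  rw [this, inner_sub_left, real_inner_smul_left, real_inner_comm (d - t • z) z]
  have h9 : ⟪d - t • z, z⟫_ℝ = ⟪z, d - t • z⟫_ℝ := real_inner_comm _ _
  rw [h9]
  linarith [hzw]

lemma inner_Aapp_nonneg (c γ : ℝ) (hc : 0 ≤ c) (z d : E3) : 0 ≤ ⟪d, Aapp c γ z d⟫_ℝ := by
  rw [inner_Aapp]; positivity

lemma inner_Aapp_eq_zero_of_parallel (c γ : ℝ) (z d : E3) (s : ℝ) (hd : d = s • z) :
    ⟪d, Aapp c γ z d⟫_ℝ = 0 := by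
  rw [inner_Aapp]
  rcases eq_or_ne z 0 with rfl | hz
  · simp [hd]
  · have hz2 : ‖z‖ ^ (2:ℕ) ≠ 0 := pow_ne_zero _ (norm_ne_zero_iff.2 hz)
    have : (⟪z, d⟫_ℝ / ‖z‖ ^ (2:ℕ)) = s := by
      rw [hd, real_inner_smul_right, real_inner_self_eq_norm_sq]
      field_simp
    rw [this, hd]
    simp

lemma parallel_of_inner_Aapp_eq_zero (c γ : ℝ) (hc : 0 < c) (z d : E3) (hz : z ≠ 0)
    (h : ⟪d, Aapp c γ z d⟫_ℝ = 0) : ∃ s : ℝ, d = s • z := by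
  rw [inner_Aapp] at h
  have hzpos : 0 < ‖z‖ ^ (γ+2) := Real.rpow_pos_of_pos (norm_pos_iff.2 hz) _
  have hfac : (0:ℝ) < c * ‖z‖ ^ (γ+2) := mul_pos hc hzpos
  have h2 : ‖d - (⟪z, d⟫_ℝ / ‖z‖ ^ (2:ℕ)) • z‖ ^ (2:ℕ) = 0 := by
    rcases mul_eq_zero.1 h with h' | h'
    · exact absurd h' hfac.ne'
    · exact h'
  refine ⟨⟪z, d⟫_ℝ / ‖z‖ ^ (2:ℕ), ?_⟩
  have := pow_eq_zero_iff (n := 2) (by norm_num) |>.1 h2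
  have := norm_eq_zero.1 this
  linear_combination (norm := module) this

lemma inner_Aapp_le (c γ : ℝ) (hc : 0 ≤ c) (hγ1 : 0 ≤ γ + 2) (hγ2 : γ + 2 ≤ 3) (z d : E3) :
    ⟪d, Aapp c γ z d⟫_ℝ ≤ c * (1 + ‖z‖) ^ (3:ℕ) * (4 * ‖d‖ ^ (2:ℕ)) := by
  rw [inner_Aapp]
  have hw : ‖d - (⟪z, d⟫_ℝ / ‖z‖ ^ (2:ℕ)) • z‖ ≤ 2 * ‖d‖ := by
    refine (norm_sub_le _ _).trans ?_
    have : ‖(⟪z, d⟫_ℝ / ‖z‖ ^ (2:ℕ)) • z‖ ≤ ‖d‖ := by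
      rw [norm_smul, Real.norm_eq_abs, abs_div]
      rcases eq_or_ne z 0 with rfl | hz
      · simp
      · have hz0 : 0 < ‖z‖ := norm_pos_iff.2 hz
        rw [abs_of_nonneg (by positivity : (0:ℝ) ≤ ‖z‖ ^ (2:ℕ))]
        rw [div_mul_eq_mul_div, div_le_iff₀ (by positivity)]
        calc |⟪z, d⟫_ℝ| * ‖z‖ ≤ ‖z‖ * ‖d‖ * ‖z‖ :=
              mul_le_mul_of_nonneg_right (abs_real_inner_le_norm z d) hz0.le
          _ = ‖d‖ * ‖z‖ ^ (2:ℕ) := by ring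
    linarith
  have hz3 : ‖z‖ ^ (γ+2) ≤ (1 + ‖z‖) ^ (3:ℕ) := by
    have h1 : ‖z‖ ^ (γ+2) ≤ (1 + ‖z‖) ^ (γ+2) :=
      Real.rpow_le_rpow (norm_nonneg z) (by linarith [norm_nonneg z]) hγ1
    have h2 : (1 + ‖z‖) ^ (γ+2) ≤ (1 + ‖z‖) ^ ((3:ℕ):ℝ) :=
      Real.rpow_le_rpow_of_exponent_le (by linarith [norm_nonneg z]) (by norm_num; linarith)
    rw [Real.rpow_natCast] at h2
    linarith
  have hwsq : ‖d - (⟪z, d⟫_ℝ / ‖z‖ ^ (2:ℕ)) • z‖ ^ (2:ℕ) ≤ 4 * ‖d‖ ^ (2:ℕ) := by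
    have := pow_le_pow_left₀ (norm_nonneg _) hw 2
    calc ‖d - (⟪z, d⟫_ℝ / ‖z‖ ^ (2:ℕ)) • z‖ ^ (2:ℕ) ≤ (2*‖d‖)^(2:ℕ) := this
      _ = 4 * ‖d‖ ^ (2:ℕ) := by ring
  calc c * ‖z‖ ^ (γ+2) * ‖d - (⟪z, d⟫_ℝ / ‖z‖ ^ (2:ℕ)) • z‖ ^ (2:ℕ)
      ≤ c * (1+‖z‖) ^ (3:ℕ) * (4 * ‖d‖ ^ (2:ℕ)) := by
        apply mul_le_mul
        · exact mul_le_mul_of_nonneg_left hz3 hc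
        · exact hwsq
        · positivity
        · positivity

/- ===== Maxwellian gradient ===== -/

lemma maxwellian_log_gradient (ρ m θ : ℝ) (hρ : 0 < ρ) (hm : 0 < m) (hθ : 0 < θ) (u : E3)
    (G : E3 → ℝ)
    (hG : ∀ p, G p = ρ * (2*π*m*θ) ^ (-(3:ℝ)/2) * Real.exp (-‖p - m•u‖^(2:ℕ)/(2*m*θ)))
    (p : E3) :
    gradient (fun q => Real.log (G q)) p = (-(1/(m*θ))) • p + (1/θ) • u := by
  have hcpos : (0:ℝ) < ρ * (2*π*m*θ) ^ (-(3:ℝ)/2) :=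
    mul_pos hρ (Real.rpow_pos_of_pos (by positivity) _)
  have hfun : (fun q => Real.log (G q))
      = fun q : E3 => (-(1/(2*m*θ))) * ‖q‖^(2:ℕ) + ⟪(1/θ) • u, q⟫_ℝ
          + (Real.log (ρ * (2*π*m*θ) ^ (-(3:ℝ)/2)) - ‖m•u‖^(2:ℕ)/(2*m*θ)) := by
    funext q
    rw [hG q, Real.log_mul hcpos.ne' (Real.exp_ne_zero _), Real.log_exp]
    have hns : ‖q - m•u‖^(2:ℕ) = ‖q‖^(2:ℕ) - 2*⟪q, m•u⟫_ℝ + ‖m•u‖^(2:ℕ) :=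
      norm_sub_sq_real q (m•u)
    rw [hns, real_inner_smul_right, real_inner_smul_left, real_inner_comm q u]
    have hmθ : m*θ ≠ 0 := by positivity
    field_simp
    ring
  rw [hfun]
  have := (hasGradientAt_quad (-(1/(2*m*θ)))
      (Real.log (ρ * (2*π*m*θ) ^ (-(3:ℝ)/2)) - ‖m•u‖^(2:ℕ)/(2*m*θ)) ((1/θ) • u) p).gradient
  rw [this]
  congr 1
  rw [show 2*(-(1/(2*m*θ))) = -(1/(m*θ)) by field_simp]

/- ===== integrability helpers ===== -/

lemma one_add_pow_le (x : ℝ) (hx : 0 ≤ x) (m : ℕ) :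
    (1 + x) ^ m ≤ 2 ^ m * (1 + x ^ m) := by
  rcases le_total x 1 with h | h
  · have : (1+x)^m ≤ 2^m := pow_le_pow_left₀ (by linarith) (by linarith) m
    have h2 : (0:ℝ) ≤ x ^ m := by positivity
    nlinarith [pow_nonneg (by linarith : (0:ℝ) ≤ 1+x) m]
  · have : (1+x)^m ≤ (2*x)^m := pow_le_pow_left₀ (by linarith) (by linarith) m
    have h2 : (2*x)^m = 2^m * x^m := by rw [mul_pow]
    nlinarith [pow_pos (by linarith : (0:ℝ) < 2) m]

lemma schwartz_poly_integrable (f : SchwartzMap E3 ℝ) (m : ℕ) :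
    Integrable (fun p : E3 => (1+‖p‖)^m * f p) (volume : Measure E3) := by
  have h1 : Integrable (fun p : E3 => (2:ℝ)^m * (‖f p‖ + ‖p‖^m * ‖f p‖)) volume := by
    refine Integrable.const_mul ?_ _
    exact (f.integrable (μ := volume)).norm.add (by simpa using f.integrable_pow_mul volume m)
  refine h1.mono ?_ ?_
  · exact ((continuous_const.add continuous_norm).pow m).mul f.continuous
      |>.aestronglyMeasurable
  · refine Filter.Eventually.of_forall (fun p => ?_)
    have h3 := one_add_pow_le ‖p‖ (norm_nonneg p) m
    have hb : ‖(1+‖p‖)^m * f p‖ = (1+‖p‖)^m * ‖f p‖ := by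
      rw [norm_mul, Real.norm_eq_abs ((1+‖p‖)^m), abs_of_nonneg (by positivity : (0:ℝ) ≤ (1+‖p‖)^m)]
    have hr : ‖(2:ℝ)^m * (‖f p‖ + ‖p‖^m * ‖f p‖)‖ = 2^m * (‖f p‖ + ‖p‖^m * ‖f p‖) := by
      rw [Real.norm_eq_abs]; exact abs_of_nonneg (by positivity)
    rw [hb, hr]
    nlinarith [mul_le_mul_of_nonneg_right h3 (norm_nonneg (f p)), norm_nonneg (f p),
      pow_nonneg (norm_nonneg p) m]


/-- A Schwartz function cannot equal `exp(a‖p‖² + ⟪u,p⟫ + C)` unless `a < 0`. -/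
lemma exp_coeff_neg (f : SchwartzMap E3 ℝ) (a C : ℝ) (u : E3)
    (hf : ∀ p, f p = Real.exp (a * ‖p‖^(2:ℕ) + ⟪u, p⟫_ℝ + C)) : a < 0 := by
  by_contra hc
  push_neg at hc
  obtain ⟨e, he1, he2⟩ : ∃ e : E3, ‖e‖ = 1 ∧ 0 ≤ ⟪u, e⟫_ℝ := by
    rcases eq_or_ne u 0 with rfl | hu
    · refine ⟨EuclideanSpace.single 0 1, ?_, by simp⟩
      simp [EuclideanSpace.norm_single]
    · refine ⟨‖u‖⁻¹ • u, ?_, ?_⟩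
      · rw [norm_smul, Real.norm_eq_abs, abs_of_nonneg (by positivity),
          inv_mul_cancel₀ (norm_ne_zero_iff.2 hu)]
      · rw [real_inner_smul_right, real_inner_self_eq_norm_sq]
        positivity
  obtain ⟨B, hB1, hB⟩ := f.decay 1 0
  set t : ℝ := max 1 ((B+1) * Real.exp (-C)) with htdef
  have ht1 : (1:ℝ) ≤ t := le_max_left _ _
  have ht0 : (0:ℝ) < t := by linarith
  have hBt : (B+1) * Real.exp (-C) ≤ t := le_max_right _ _
  have hkey := hB (t • e)
  rw [norm_iteratedFDeriv_zero] at hkey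
  have hnorm : ‖t • e‖ = t := by
    rw [norm_smul, Real.norm_eq_abs, abs_of_pos ht0, he1, mul_one]
  have hfval : f (t • e) = Real.exp (a * t^(2:ℕ) + t * ⟪u, e⟫_ℝ + C) := by
    rw [hf, hnorm, real_inner_smul_right]
  have hexp : Real.exp C ≤ Real.exp (a * t^(2:ℕ) + t * ⟪u, e⟫_ℝ + C) := by
    apply Real.exp_le_exp.2
    nlinarith
  have hpos : (0:ℝ) < Real.exp (a * t^(2:ℕ) + t * ⟪u, e⟫_ℝ + C) := Real.exp_pos _
  rw [hnorm, pow_one, hfval, Real.norm_eq_abs, abs_of_pos hpos] at hkey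
  have h1 : t * Real.exp C ≤ B := le_trans (by nlinarith) hkey
  have h2 : (B+1) * Real.exp (-C) * Real.exp C ≤ t * Real.exp C :=
    mul_le_mul_of_nonneg_right hBt (Real.exp_pos C).le
  rw [mul_assoc, ← Real.exp_add, neg_add_cancel, Real.exp_zero, mul_one] at h2
  linarith

/-- Final algebraic identity rewriting a quadratic exponential as a Maxwellian. -/
lemma quadratic_exp_eq_maxwellian (m θ F0 : ℝ) (hm : 0 < m) (hθ : 0 < θ) (hF0 : 0 < F0)
    (u0 : E3) (p : E3) :
    F0 * Real.exp ((-θ⁻¹ * m⁻¹ / 2) * ‖p‖^(2:ℕ) + ⟪u0, p⟫_ℝ)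
      = (F0 * (2*π*m*θ) ^ ((3:ℝ)/2) * Real.exp (m * ‖θ • u0‖^(2:ℕ) / (2*θ)))
        * (2*π*m*θ) ^ (-(3:ℝ)/2)
        * Real.exp (-‖p - m • (θ • u0)‖^(2:ℕ) / (2*m*θ)) := by
  have hbase : (0:ℝ) < 2*π*m*θ := by positivity
  have hrw : (2*π*m*θ) ^ ((3:ℝ)/2) * (2*π*m*θ) ^ (-(3:ℝ)/2) = 1 := by
    rw [← Real.rpow_add hbase]
    norm_num
  have hns : ‖p - m • (θ • u0)‖^(2:ℕ)
      = ‖p‖^(2:ℕ) - 2*⟪p, m • (θ • u0)⟫_ℝ + ‖m • (θ • u0)‖^(2:ℕ) :=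
    norm_sub_sq_real _ _
  have hsm : ‖m • (θ • u0)‖^(2:ℕ) = m^(2:ℕ) * θ^(2:ℕ) * ‖u0‖^(2:ℕ) := by
    rw [norm_smul, norm_smul, Real.norm_eq_abs, Real.norm_eq_abs,
      abs_of_pos hm, abs_of_pos hθ]
    ring
  have hsu : ‖θ • u0‖^(2:ℕ) = θ^(2:ℕ) * ‖u0‖^(2:ℕ) := by
    rw [norm_smul, Real.norm_eq_abs, abs_of_pos hθ]
    ring
  have hip : ⟪p, m • (θ • u0)⟫_ℝ = m * θ * ⟪u0, p⟫_ℝ := by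
    rw [real_inner_smul_right, real_inner_smul_right, real_inner_comm]
    ring
  calc F0 * Real.exp ((-θ⁻¹ * m⁻¹ / 2) * ‖p‖^(2:ℕ) + ⟪u0, p⟫_ℝ)
      = F0 * ((2*π*m*θ) ^ ((3:ℝ)/2) * (2*π*m*θ) ^ (-(3:ℝ)/2))
        * (Real.exp (m * ‖θ • u0‖^(2:ℕ) / (2*θ)) *
            Real.exp (-‖p - m • (θ • u0)‖^(2:ℕ) / (2*m*θ))) := by
        rw [hrw, ← Real.exp_add]
        congr 2
        · ring
        · rw [hns, hsm, hsu, hip]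
          field_simp
          ring
    _ = (F0 * (2*π*m*θ) ^ ((3:ℝ)/2) * Real.exp (m * ‖θ • u0‖^(2:ℕ) / (2*θ)))
        * (2*π*m*θ) ^ (-(3:ℝ)/2)
        * Real.exp (-‖p - m • (θ • u0)‖^(2:ℕ) / (2*m*θ)) := by ring


lemma exists_mem_ball_ae {x : E3} {δ : ℝ} (hδ : 0 < δ) {Q : E3 → Prop}
    (hQ : ∀ᵐ p, Q p) : ∃ p, dist p x < δ ∧ Q p := by
  have hball : (0:ℝ≥0∞) < volume (Metric.ball x δ) := Metric.measure_ball_pos volume x hδ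
  have hcompl : volume {p : E3 | ¬ Q p} = 0 := ae_iff.1 hQ
  have hle := measure_le_inter_add_diff volume (Metric.ball x δ) {p | Q p}
  have hdiff : volume (Metric.ball x δ \ {p | Q p}) = 0 :=
    measure_mono_null (fun p hp => hp.2) hcompl
  have hpos : volume (Metric.ball x δ ∩ {p | Q p}) ≠ 0 := by
    intro h
    rw [h, hdiff, add_zero] at hle
    exact absurd (le_antisymm hle (zero_le)) hball.ne'
  obtain ⟨p, hp⟩ := nonempty_of_measure_ne_zero hpos
  exact ⟨p, Metric.mem_ball.1 hp.1, hp.2⟩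


end EntropyAux

set_option maxHeartbeats 1000000
open EntropyAux

/-- vanishing of the entropy production characterizes Maxwellians with
common velocity and temperature. -/
theorem entropy_production_eq_zero_iff (N : ℕ) (hN : 2 ≤ N)
    (mass : Fin N → ℝ) (hmass : ∀ i, 0 < mass i)
    (C : Fin N → Fin N → ℝ) (hC : ∀ i j, 0 < C i j) (hCsymm : ∀ i j, C i j = C j i)
    (γ : ℝ) (hγ : γ ∈ Set.Icc (-2 : ℝ) 1)
    (F : Fin N → SchwartzMap E3 ℝ) (hpos : ∀ i p, 0 < F i p)
    (hgrowth : ∀ i, ∃ (c : ℝ) (k : ℕ), ∀ p : E3,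
      ‖gradient (fun q => Real.log (F i q)) p‖ ≤ c * (1 + ‖p‖) ^ k) :
    entProd mass C γ (fun i => ⇑(F i)) = 0 ↔
      ∃ (ρt : Fin N → ℝ) (u : E3) (θ : ℝ), (∀ i, 0 < ρt i) ∧ 0 < θ ∧
        ∀ i p, F i p = ρt i * (2 * π * mass i * θ) ^ (-(3 : ℝ) / 2) *
          Real.exp (-‖p - mass i • u‖ ^ (2 : ℕ) / (2 * mass i * θ)) := by
  have hγ1 : 0 ≤ γ + 2 := by linarith [hγ.1]
  have hγ2 : γ + 2 ≤ 3 := by linarith [hγ.2]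
  set v : Fin N → E3 → E3 := fun i p => gradient (fun q => Real.log (F i q)) p with hvdef
  set X : Fin N → Fin N → E3 × E3 → ℝ := fun i j x =>
    F i x.1 * F j x.2 *
      ⟪v i x.1 - v j x.2,
        Aapp (C i j) γ ((mass i)⁻¹ • x.1 - (mass j)⁻¹ • x.2) (v i x.1 - v j x.2)⟫_ℝ with hXdef
  have hrepr : entProd mass C γ (fun i => ⇑(F i))
      = (1 / 2) * ∑ i, ∑ j, ∫ p, ∫ p', X i j (p, p') := rfl
  constructor
  · -- forward direction
    intro h0
    rw [hrepr] at h0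
    -- each double integral is nonnegative
    have hXnn : ∀ i j x, 0 ≤ X i j x := fun i j x =>
      mul_nonneg (mul_nonneg (hpos i x.1).le (hpos j x.2).le)
        (inner_Aapp_nonneg _ _ (hC i j).le _ _)
    have hTnn : ∀ i j, 0 ≤ ∫ p, ∫ p', X i j (p, p') :=
      fun i j => integral_nonneg (fun p => integral_nonneg (fun p' => hXnn i j (p, p')))
    have hT : ∀ i j, (∫ p, ∫ p', X i j (p, p')) = 0 := by
      have hsum : ∑ i, ∑ j, ∫ p, ∫ p', X i j (p, p') = 0 := by linarith
      intro i j
      have h1 := (Finset.sum_eq_zero_iff_of_nonneg (fun i _ =>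
        Finset.sum_nonneg (fun j _ => hTnn i j))).1 hsum i (Finset.mem_univ i)
      exact (Finset.sum_eq_zero_iff_of_nonneg (fun j _ => hTnn i j)).1 h1 j (Finset.mem_univ j)
    -- continuity of ingredients
    have hvcont : ∀ i, Continuous (v i) := fun i => logF_grad_continuous (F i) (hpos i)
    have hdcont : ∀ i j, Continuous (fun x : E3 × E3 => v i x.1 - v j x.2) := fun i j =>
      ((hvcont i).comp continuous_fst).sub ((hvcont j).comp continuous_snd)
    have hzcont : ∀ i j, Continuous (fun x : E3 × E3 => (mass i)⁻¹ • x.1 - (mass j)⁻¹ • x.2) :=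
      fun i j => (continuous_fst.const_smul (mass i)⁻¹).sub (continuous_snd.const_smul (mass j)⁻¹)
    -- rewritten form of X
    have hXeq : ∀ i j (x : E3 × E3), X i j x = (F i x.1 * F j x.2) *
        ((C i j * ‖(mass i)⁻¹ • x.1 - (mass j)⁻¹ • x.2‖ ^ (γ+2)) *
          ‖(v i x.1 - v j x.2) - (⟪(mass i)⁻¹ • x.1 - (mass j)⁻¹ • x.2, v i x.1 - v j x.2⟫_ℝ /
              ‖(mass i)⁻¹ • x.1 - (mass j)⁻¹ • x.2‖ ^ (2:ℕ)) •
                ((mass i)⁻¹ • x.1 - (mass j)⁻¹ • x.2)‖ ^ (2:ℕ)) := by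
      intro i j x
      rw [hXdef]
      simp only []
      rw [inner_Aapp]
    have hXm : ∀ i j, Measurable (X i j) := by
      intro i j
      have hz := hzcont i j
      have hd := hdcont i j
      have ht : Measurable (fun x : E3 × E3 =>
          ⟪(mass i)⁻¹ • x.1 - (mass j)⁻¹ • x.2, v i x.1 - v j x.2⟫_ℝ
            / ‖(mass i)⁻¹ • x.1 - (mass j)⁻¹ • x.2‖ ^ (2:ℕ)) :=
        ((hz.inner hd).measurable).div ((hz.norm.pow 2).measurable)
      rw [show X i j = _ from funext (hXeq i j)]
      refine Measurable.mul ?_ (Measurable.mul ?_ ?_)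
      · exact (((F i).continuous.comp continuous_fst).mul
          ((F j).continuous.comp continuous_snd)).measurable
      · exact (continuous_const.mul ((Real.continuous_rpow_const hγ1).comp hz.norm)).measurable
      · exact ((hd.measurable.sub (ht.smul hz.measurable)).norm.pow_const 2)
    -- integrability
    have hXint : ∀ i j, Integrable (X i j) ((volume : Measure E3).prod volume) := by
      intro i j
      obtain ⟨ci, ki, hci⟩ := hgrowth i
      obtain ⟨cj, kj, hcj⟩ := hgrowth j
      have hci0 : 0 ≤ ci := le_trans (norm_nonneg _) (by simpa using hci 0)
      have hcj0 : 0 ≤ cj := le_trans (norm_nonneg _) (by simpa using hcj 0)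
      set k : ℕ := max ki kj with hk
      set m : ℕ := 3 + k * 2 with hm
      set B : ℝ := C i j * (1 + (mass i)⁻¹ + (mass j)⁻¹)^(3:ℕ) * (4 * (ci + cj)^(2:ℕ)) with hB
      have hbound : ∀ x : E3 × E3,
          ‖X i j x‖ ≤ B * ((1+‖x.1‖)^m * F i x.1 * ((1+‖x.2‖)^m * F j x.2)) := by
        rintro ⟨p, p'⟩
        set z : E3 := (mass i)⁻¹ • p - (mass j)⁻¹ • p' with hzdef2
        set d : E3 := v i p - v j p' with hddef2
        have h1 : ‖X i j (p,p')‖ = F i p * F j p' * ⟪d, Aapp (C i j) γ z d⟫_ℝ := by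
          rw [Real.norm_eq_abs, abs_of_nonneg (hXnn i j (p,p'))]
        rw [h1]
        have h2 : ⟪d, Aapp (C i j) γ z d⟫_ℝ ≤ C i j * (1+‖z‖)^(3:ℕ) * (4*‖d‖^(2:ℕ)) :=
          inner_Aapp_le _ _ (hC i j).le hγ1 hγ2 z d
        have hai : 0 ≤ (mass i)⁻¹ := (inv_pos.2 (hmass i)).le
        have haj : 0 ≤ (mass j)⁻¹ := (inv_pos.2 (hmass j)).le
        have hz1 : 1 + ‖z‖ ≤ (1 + (mass i)⁻¹ + (mass j)⁻¹) * ((1+‖p‖) * (1+‖p'‖)) := by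
          have hzn : ‖z‖ ≤ (mass i)⁻¹ * ‖p‖ + (mass j)⁻¹ * ‖p'‖ := by
            rw [hzdef2]
            refine (norm_sub_le _ _).trans ?_
            rw [norm_smul, norm_smul, Real.norm_eq_abs, Real.norm_eq_abs,
              abs_of_nonneg hai, abs_of_nonneg haj]
          nlinarith [norm_nonneg p, norm_nonneg p',
            mul_nonneg (norm_nonneg p) (norm_nonneg p'),
            mul_nonneg hai (norm_nonneg p'), mul_nonneg haj (norm_nonneg p),
            mul_nonneg (mul_nonneg hai (norm_nonneg p)) (norm_nonneg p'),
            mul_nonneg (mul_nonneg haj (norm_nonneg p)) (norm_nonneg p')]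
        have hp0 : (0:ℝ) ≤ 1 + ‖p‖ := by linarith [norm_nonneg p]
        have hp'0 : (0:ℝ) ≤ 1 + ‖p'‖ := by linarith [norm_nonneg p']
        have h6 : (1:ℝ) ≤ (1+‖p‖)^k := one_le_pow₀ (by linarith [norm_nonneg p])
        have h7 : (1:ℝ) ≤ (1+‖p'‖)^k := one_le_pow₀ (by linarith [norm_nonneg p'])
        have hd1 : ‖d‖ ≤ (ci + cj) * ((1+‖p‖)^k * (1+‖p'‖)^k) := by
          have h3 : ‖d‖ ≤ ci * (1+‖p‖)^ki + cj * (1+‖p'‖)^kj :=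
            (norm_sub_le _ _).trans (add_le_add (hci p) (hcj p'))
          have h4 : (1+‖p‖)^ki ≤ (1+‖p‖)^k :=
            pow_le_pow_right₀ (by linarith [norm_nonneg p]) (le_max_left _ _)
          have h5 : (1+‖p'‖)^kj ≤ (1+‖p'‖)^k :=
            pow_le_pow_right₀ (by linarith [norm_nonneg p']) (le_max_right _ _)
          have t1 : ci * (1+‖p‖)^ki ≤ ci * ((1+‖p‖)^k * (1+‖p'‖)^k) :=
            mul_le_mul_of_nonneg_left
              (h4.trans (le_mul_of_one_le_right (by positivity) h7)) hci0
          have t2 : cj * (1+‖p'‖)^kj ≤ cj * ((1+‖p‖)^k * (1+‖p'‖)^k) :=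
            mul_le_mul_of_nonneg_left
              (h5.trans (le_mul_of_one_le_left (by positivity) h6)) hcj0
          linarith
        calc F i p * F j p' * ⟪d, Aapp (C i j) γ z d⟫_ℝ
            ≤ F i p * F j p' * (C i j * (1+‖z‖)^(3:ℕ) * (4*‖d‖^(2:ℕ))) :=
              mul_le_mul_of_nonneg_left h2 (mul_nonneg (hpos i p).le (hpos j p').le)
          _ ≤ F i p * F j p' *
              (C i j * ((1 + (mass i)⁻¹ + (mass j)⁻¹) * ((1+‖p‖) * (1+‖p'‖)))^(3:ℕ)
                * (4*((ci+cj) * ((1+‖p‖)^k*(1+‖p'‖)^k))^(2:ℕ))) := by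
              have hFF' : 0 ≤ F i p * F j p' := mul_nonneg (hpos i p).le (hpos j p').le
              have hC0 : 0 ≤ C i j := (hC i j).le
              gcongr <;>
                first
                  | exact hFF'
                  | exact hC0
                  | exact mul_nonneg hC0 (by positivity)
                  | exact hz1
                  | exact hd1
                  | positivity
                  | linarith [norm_nonneg z]
                  | exact norm_nonneg d
          _ = B * ((1+‖p‖)^m * F i p * ((1+‖p'‖)^m * F j p')) := by
              rw [hB, hm]
              have e1 : ∀ y:ℝ, (1+y)^(3+k*2) = (1+y)^(3:ℕ) * ((1+y)^k)^(2:ℕ) := by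
                intro y; rw [pow_add, pow_mul]
              rw [e1 ‖p‖, e1 ‖p'‖]
              ring
      refine Integrable.mono'
        ((Integrable.mul_prod (schwartz_poly_integrable (F i) m)
          (schwartz_poly_integrable (F j) m)).const_mul B)
        (hXm i j).aestronglyMeasurable (Filter.Eventually.of_forall hbound)
    -- a.e. vanishing
    have h4 : ∀ i j, ∀ᵐ p : E3, ∀ᵐ p' : E3, X i j (p, p') = 0 := by
      intro i j
      have hint := hXint i j
      have hg : (fun p => ∫ p', X i j (p, p')) =ᵐ[(volume : Measure E3)] 0 := by
        refine (integral_eq_zero_iff_of_nonneg ?_ hint.integral_prod_left).1 (hT i j)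
        exact fun p => integral_nonneg (fun p' => hXnn i j (p,p'))
      filter_upwards [hg, hint.prod_right_ae] with p hp1 hp2
      have hz := (integral_eq_zero_iff_of_nonneg
        (fun p' => hXnn i j (p,p')) hp2).1 (by simpa using hp1)
      filter_upwards [hz] with p' hp'
      simpa using hp'
    -- pointwise vanishing off the singular set
    have h5 : ∀ i j (p₀ p₀' : E3), (mass i)⁻¹ • p₀ - (mass j)⁻¹ • p₀' ≠ 0 →
        X i j (p₀, p₀') = 0 := by
      intro i j p₀ p₀' hz0
      by_contra hne
      have hz := hzcont i j
      have hd := hdcont i j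
      have hzz : ‖(mass i)⁻¹ • p₀ - (mass j)⁻¹ • p₀'‖ ^ (2:ℕ) ≠ 0 :=
        pow_ne_zero _ (norm_ne_zero_iff.2 hz0)
      have hcont : ContinuousAt (X i j) (p₀, p₀') := by
        rw [show X i j = _ from funext (hXeq i j)]
        have ct : ContinuousAt (fun x : E3 × E3 =>
            ⟪(mass i)⁻¹ • x.1 - (mass j)⁻¹ • x.2, v i x.1 - v j x.2⟫_ℝ
              / ‖(mass i)⁻¹ • x.1 - (mass j)⁻¹ • x.2‖ ^ (2:ℕ)) (p₀, p₀') :=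
          ((hz.inner hd).continuousAt).div ((hz.norm.pow 2).continuousAt) hzz
        refine ContinuousAt.mul ?_ (ContinuousAt.mul ?_ ?_)
        · exact (((F i).continuous.comp continuous_fst).mul
            ((F j).continuous.comp continuous_snd)).continuousAt
        · exact (continuous_const.mul
            ((Real.continuous_rpow_const hγ1).comp hz.norm)).continuousAt
        · exact (((hd.continuousAt).sub (ct.smul hz.continuousAt)).norm).pow 2
      obtain ⟨δ, hδpos, hδ⟩ := Metric.continuousAt_iff.1 hcont _ (abs_pos.2 hne)
      obtain ⟨p, hpd, hpA⟩ := exists_mem_ball_ae hδpos (h4 i j)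
      obtain ⟨p', hp'd, hp'0⟩ := exists_mem_ball_ae hδpos hpA
      have hdist : dist (p, p') (p₀, p₀') < δ := by
        rw [Prod.dist_eq]; exact max_lt hpd hp'd
      have hlt := hδ hdist
      rw [hp'0, Real.dist_eq, zero_sub, abs_neg] at hlt
      exact lt_irrefl _ hlt
    -- parallelism
    have hpar : ∀ i j (p p' : E3), (mass i)⁻¹ • p - (mass j)⁻¹ • p' ≠ 0 →
        ∃ s : ℝ, v i p - v j p' = s • ((mass i)⁻¹ • p - (mass j)⁻¹ • p') := by
      intro i j p p' hz
      have h := h5 i j p p' hz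
      rw [hXdef] at h
      simp only [] at h
      have hFF : 0 < F i p * F j p' := mul_pos (hpos i p) (hpos j p')
      have hin : ⟪v i p - v j p',
          Aapp (C i j) γ ((mass i)⁻¹ • p - (mass j)⁻¹ • p') (v i p - v j p')⟫_ℝ = 0 := by
        rcases mul_eq_zero.1 h with h' | h'
        · exact absurd h' hFF.ne'
        · exact h'
      exact parallel_of_inner_Aapp_eq_zero _ _ (hC i j) _ _ hz hin
    -- affine structure of the gradients
    have hfam : ∀ i j (q q' : E3), q ≠ q' →
        ∃ s : ℝ, v i (mass i • q) - v j (mass j • q') = s • (q - q') := by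
      intro i j q q' hqq
      have hzeq : (mass i)⁻¹ • (mass i • q) - (mass j)⁻¹ • (mass j • q') = q - q' := by
        rw [inv_smul_smul₀ (hmass i).ne', inv_smul_smul₀ (hmass j).ne']
      have h := hpar i j (mass i • q) (mass j • q')
        (by rw [hzeq]; exact sub_ne_zero.2 hqq)
      rw [hzeq] at h
      exact h
    obtain ⟨lam, u0, hw⟩ := affine_of_parallel_family (fun i q => v i (mass i • q)) hfam
    have hvi : ∀ i p, v i p = (lam * (mass i)⁻¹) • p + u0 := by
      intro i p
      have h1 : mass i • ((mass i)⁻¹ • p) = p := smul_inv_smul₀ (hmass i).ne' p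
      have h2 := hw i ((mass i)⁻¹ • p)
      rw [h1] at h2
      rw [h2, smul_smul]
    have hdiffble : ∀ i, Differentiable ℝ (fun p => Real.log (F i p)) :=
      fun i => (logF_contDiff (F i) (hpos i)).differentiable one_ne_zero
    have hquad : ∀ i p, Real.log (F i p)
        = ((lam * (mass i)⁻¹)/2) * ‖p‖^(2:ℕ) + ⟪u0, p⟫_ℝ + Real.log (F i 0) :=
      fun i p => eq_quadratic_of_gradient_affine _ (hdiffble i) _ u0 (hvi i) p
    have hFexp : ∀ i p, F i p = Real.exp (((lam * (mass i)⁻¹)/2) * ‖p‖^(2:ℕ)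
        + ⟪u0, p⟫_ℝ + Real.log (F i 0)) := by
      intro i p
      rw [← hquad i p, Real.exp_log (hpos i p)]
    have hlam : lam < 0 := by
      have i0 : Fin N := ⟨0, by omega⟩
      have ha := exp_coeff_neg (F i0) _ _ u0 (hFexp i0)
      have hm := hmass i0
      by_contra hcon
      push_neg at hcon
      nlinarith [inv_pos.2 hm]
    set θ : ℝ := -lam⁻¹ with hθdef
    have hθ : 0 < θ := by
      rw [hθdef]
      have := inv_lt_zero.2 hlam
      linarith
    refine ⟨fun i => F i 0 * (2*π*mass i*θ) ^ ((3:ℝ)/2)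
        * Real.exp (mass i * ‖θ • u0‖^(2:ℕ) / (2*θ)), θ • u0, θ, ?_, hθ, ?_⟩
    · intro i
      have := hpos i 0
      have := hmass i
      positivity
    · intro i p
      have hkey := quadratic_exp_eq_maxwellian (mass i) θ (F i 0) (hmass i) hθ (hpos i 0) u0 p
      rw [hFexp i p, Real.exp_add, Real.exp_log (hpos i 0)]
      have hcoef : ((lam * (mass i)⁻¹)/2) = -θ⁻¹ * (mass i)⁻¹ / 2 := by
        rw [hθdef, inv_neg, inv_inv]
        ring
      rw [hcoef, mul_comm]
      exact hkey
  · -- backward direction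
    rintro ⟨ρt, u, θ, hρt, hθ, hF⟩
    rw [hrepr]
    have hzero : ∀ i j (p p' : E3), X i j (p, p') = 0 := by
      intro i j p p'
      have hgi := maxwellian_log_gradient (ρt i) (mass i) θ (hρt i) (hmass i) hθ u
        (⇑(F i)) (hF i) p
      have hgj := maxwellian_log_gradient (ρt j) (mass j) θ (hρt j) (hmass j) hθ u
        (⇑(F j)) (hF j) p'
      have hd : v i p - v j p'
          = (-(1/θ)) • ((mass i)⁻¹ • p - (mass j)⁻¹ • p') := by
        rw [hvdef]
        simp only []
        rw [hgi, hgj]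
        match_scalars <;> (field_simp; try ring)
      have := inner_Aapp_eq_zero_of_parallel (C i j) γ
        ((mass i)⁻¹ • p - (mass j)⁻¹ • p') (v i p - v j p') (-(1/θ)) hd
      rw [hXdef]
      simp only []
      rw [this, mul_zero]
    have : ∀ i j : Fin N, (∫ p, ∫ p', X i j (p, p')) = 0 := by
      intro i j
      have h1 : ∀ p, (∫ p', X i j (p, p')) = 0 := by
        intro p
        rw [show (fun p' => X i j (p, p')) = fun _ => (0:ℝ) from funext (fun p' => hzero i j p p')]
        exact integral_zero _ _
      rw [show (fun p => ∫ p', X i j (p, p')) = fun _ => (0:ℝ) from funext h1]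
      exact integral_zero _ _
    rw [Finset.sum_congr rfl (fun i _ => Finset.sum_congr rfl (fun j _ => this i j))]
    simp

end
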